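/- arXiv:2103.13002 — 2 statements merged into one kernel-verified Lean document; each statement's English description precedes it below -/
import Mathlib

section
/- Let β ∈ (1,2) and x, y, z > 0. Then |(y + xz)^β − y^β − β·x·z·y^{β−1}| ≤ β (xz)^β. -/
open Real

lemma real_rpow_add_le_add_rpow {a b p : ℝ} (ha : 0 ≤ a) (hb : 0 ≤ b)
    (hp : 0 ≤ p) (hp1 : p ≤ 1) : (a + b) ^ p ≤ a ^ p + b ^ p := by
  have h := NNReal.rpow_add_le_add_rpow a.toNNReal b.toNNReal hp hp1
  calc (a + b) ^ p = ((a.toNNReal + b.toNNReal : NNReal) : ℝ) ^ p := by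
        rw [NNReal.coe_add, Real.coe_toNNReal _ ha, Real.coe_toNNReal _ hb]
    _ = (((a.toNNReal + b.toNNReal) ^ p : NNReal) : ℝ) := by
        rw [NNReal.coe_rpow]
    _ ≤ ((a.toNNReal ^ p + b.toNNReal ^ p : NNReal) : ℝ) := by exact_mod_cast h
    _ = a ^ p + b ^ p := by
        rw [NNReal.coe_add, NNReal.coe_rpow, NNReal.coe_rpow,
          Real.coe_toNNReal _ ha, Real.coe_toNNReal _ hb]

theorem taylor_large_jump_rpow (β x y z : ℝ) (hβ1 : 1 < β) (hβ2 : β < 2)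
    (hx : 0 < x) (hy : 0 < y) (hz : 0 < z) :
    |(y + x*z) ^ β - y ^ β - β * x * z * y ^ (β - 1)| ≤ β * (x*z) ^ β := by
  set a : ℝ := x * z with ha_def
  have ha : 0 < a := mul_pos hx hz
  have hβ0 : (0:ℝ) < β := lt_trans one_pos hβ1
  have hya : 0 < y + a := by linarith
  -- y ^ β = y * y ^ (β - 1), etc.
  have hsplit : ∀ w : ℝ, 0 < w → w ^ β = w * w ^ (β - 1) := by
    intro w hw
    have h := Real.rpow_add hw 1 (β - 1)
    rw [Real.rpow_one] at h
    rw [show (1 : ℝ) + (β - 1) = β by ring] at h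
    exact h
  -- Lower bound: y ^ β + β * a * y ^ (β-1) ≤ (y + a) ^ β  (Bernoulli)
  have h1 : y ^ β + β * a * y ^ (β - 1) ≤ (y + a) ^ β := by
    have hb := one_add_mul_self_le_rpow_one_add
      (s := a / y) (le_trans (by norm_num : (-1:ℝ) ≤ 0) (by positivity)) (p := β) hβ1.le
    have hmul := mul_le_mul_of_nonneg_right hb (le_of_lt (Real.rpow_pos_of_pos hy β))
    have heq : (1 + a / y) ^ β * y ^ β = (y + a) ^ β := by
      rw [← Real.mul_rpow (by positivity) hy.le]
      congr 1
      field_simp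
    have heq2 : (1 + β * (a / y)) * y ^ β = y ^ β + β * a * y ^ (β - 1) := by
      rw [hsplit y hy]
      field_simp
    rw [heq, heq2] at hmul
    exact hmul
  -- Upper bound: (y + a) ^ β ≤ y ^ β + β * a * (y + a) ^ (β - 1)
  have h2 : (y + a) ^ β ≤ y ^ β + β * a * (y + a) ^ (β - 1) := by
    have hs : -1 ≤ -(a / (y + a)) := by
      rw [neg_le_neg_iff]
      rw [div_le_one hya]
      linarith
    have hb := one_add_mul_self_le_rpow_one_add (s := -(a / (y + a))) hs (p := β) hβ1.le
    have hmul := mul_le_mul_of_nonneg_right hb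
      (le_of_lt (Real.rpow_pos_of_pos hya β))
    have heq : (1 + -(a / (y + a))) ^ β * (y + a) ^ β = y ^ β := by
      rw [← Real.mul_rpow (by
        have : a / (y + a) ≤ 1 := by rw [div_le_one hya]; linarith
        linarith) hya.le]
      congr 1
      field_simp
      ring
    have heq2 : (1 + β * -(a / (y + a))) * (y + a) ^ β
        = (y + a) ^ β - β * a * (y + a) ^ (β - 1) := by
      rw [hsplit (y + a) hya]
      field_simp
      ring
    rw [heq, heq2] at hmul
    linarith
  -- subadditivity of t ↦ t ^ (β - 1)
  have h3 : (y + a) ^ (β - 1) ≤ y ^ (β - 1) + a ^ (β - 1) :=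
    real_rpow_add_le_add_rpow hy.le ha.le (by linarith) (by linarith)
  have haβ : a * a ^ (β - 1) = a ^ β := (hsplit a ha).symm
  have hβa : 1 * (a ^ β) ≤ β * (a ^ β) := by
    have := Real.rpow_pos_of_pos ha β
    nlinarith
  rw [show β * x * z * y ^ (β - 1) = β * a * y ^ (β - 1) by rw [ha_def]; ring]
  rw [abs_le]
  constructor
  · have : 0 ≤ β * a ^ β := by positivity
    linarith
  · have h4 := mul_le_mul_of_nonneg_left h3 (show (0:ℝ) ≤ β * a by positivity)
    have h5 : β * (a * a ^ (β - 1)) = β * a ^ β := by rw [haβ]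
    nlinarith [h4, h5]
end

section
/- Let a > 0, k > 0, σ₁ ≥ 0, σ₂ ≥ 0, β ∈ (0,1), γ ∈ (1/2, 1], and α ∈ (1,2). Define g : (0,∞) → ℝ by g(x) = a·β·x^{β−1} − k·β·x^β − a·β·x^{−1} + k·β − (σ₁²β(1−β)/2)·x^{β−2(1−γ)} + (σ₁²β/2)·x^{−2(1−γ)} + (βσ₂²/(2(2−α)))·x^{2/α − 2} + (βσ₂/(α−1))·(x^{β + 1/α − 1} + x^{1/α − 1}). Then g is bounded above on (0,∞), i.e. there exists C > 0 with g(x) ≤ C for all x > 0. -/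
open Real

private lemma aux_rpow_bound (p q c ε r : ℝ) (hc : 0 ≤ c) (hε : 0 < ε)
    (hqr : q < r) (hrp : r < p) :
    ∃ D : ℝ, 0 ≤ D ∧ ∀ x : ℝ, 0 < x →
      c * x ^ r ≤ ε * x ^ p + ε * x ^ q + D := by
  rcases eq_or_lt_of_le hc with hc0 | hc
  · refine ⟨0, le_refl 0, fun x hx => ?_⟩
    have h1 : 0 ≤ ε * x ^ p := by positivity
    have h2 : 0 ≤ ε * x ^ q := by positivity
    rw [← hc0]; linarith
  · set X : ℝ := max 1 ((c / ε) ^ (p - r)⁻¹) with hX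
    set Y : ℝ := min 1 ((ε / c) ^ (r - q)⁻¹) with hY
    have hXpos : 0 < X := lt_of_lt_of_le one_pos (le_max_left _ _)
    have hYpos : 0 < Y := lt_min one_pos (rpow_pos_of_pos (by positivity) _)
    refine ⟨c * (X ^ r + Y ^ r), by positivity, fun x hx => ?_⟩
    have hxp : 0 ≤ ε * x ^ p := by positivity
    have hxq : 0 ≤ ε * x ^ q := by positivity
    by_cases h1 : X ≤ x
    · -- big x : c * x^r ≤ ε * x^p
      have hx1 : (c / ε) ^ (p - r)⁻¹ ≤ x := le_trans (le_max_right _ _) h1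
      have h2 : c / ε ≤ x ^ (p - r) := by
        have := rpow_le_rpow (rpow_pos_of_pos (by positivity) _).le hx1
          (by linarith : (0:ℝ) ≤ p - r)
        rwa [rpow_inv_rpow (by positivity) (by intro h; linarith [h] : p - r ≠ 0)] at this
      have h3 : c ≤ ε * x ^ (p - r) := by
        rw [div_le_iff₀ hε] at h2; linarith [h2]
      have h4 : c * x ^ r ≤ ε * x ^ (p - r) * x ^ r :=
        mul_le_mul_of_nonneg_right h3 (rpow_pos_of_pos hx r).le
      have h5 : ε * x ^ (p - r) * x ^ r = ε * x ^ p := by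
        rw [mul_assoc, ← rpow_add hx]; ring_nf
      have hD : 0 ≤ c * (X ^ r + Y ^ r) := by positivity
      calc c * x ^ r ≤ ε * x ^ p := by rw [← h5]; exact h4
        _ ≤ ε * x ^ p + ε * x ^ q + c * (X ^ r + Y ^ r) := by linarith
    · by_cases h2 : x ≤ Y
      · -- small x : c * x^r ≤ ε * x^q
        have hx1 : x ≤ (ε / c) ^ (r - q)⁻¹ := le_trans h2 (min_le_right _ _)
        have h3 : x ^ (r - q) ≤ ε / c := by
          have := rpow_le_rpow hx.le hx1 (by linarith : (0:ℝ) ≤ r - q)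
          rwa [rpow_inv_rpow (by positivity) (by intro h; linarith [h] : r - q ≠ 0)] at this
        have h4 : c * x ^ (r - q) ≤ ε := by
          rw [le_div_iff₀ hc] at h3; linarith [h3]
        have h5 : c * x ^ (r - q) * x ^ q ≤ ε * x ^ q :=
          mul_le_mul_of_nonneg_right h4 (rpow_pos_of_pos hx q).le
        have h6 : c * x ^ (r - q) * x ^ q = c * x ^ r := by
          rw [mul_assoc, ← rpow_add hx]; ring_nf
        have hD : 0 ≤ c * (X ^ r + Y ^ r) := by positivity
        calc c * x ^ r = c * x ^ (r - q) * x ^ q := h6.symm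
          _ ≤ ε * x ^ q := h5
          _ ≤ ε * x ^ p + ε * x ^ q + c * (X ^ r + Y ^ r) := by linarith
      · -- middle : Y < x < X
        push_neg at h1 h2
        have hxr : x ^ r ≤ X ^ r + Y ^ r := by
          rcases le_or_gt 0 r with hr | hr
          · have : x ^ r ≤ X ^ r := rpow_le_rpow hx.le h1.le hr
            have hY' : 0 < Y ^ r := rpow_pos_of_pos hYpos r
            linarith
          · have : x ^ r ≤ Y ^ r := rpow_le_rpow_of_nonpos hYpos h2.le hr.le
            have hX' : 0 < X ^ r := rpow_pos_of_pos hXpos r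
            linarith
        have : c * x ^ r ≤ c * (X ^ r + Y ^ r) :=
          mul_le_mul_of_nonneg_left hxr hc.le
        linarith

theorem generator_bounded_above (a k σ₁ σ₂ β γ α : ℝ)
    (ha : 0 < a) (hk : 0 < k) (hσ₁ : 0 ≤ σ₁) (hσ₂ : 0 ≤ σ₂)
    (hβ0 : 0 < β) (hβ1 : β < 1) (hγ1 : 1/2 < γ) (hγ2 : γ ≤ 1)
    (hα1 : 1 < α) (hα2 : α < 2) :
    ∃ C : ℝ, 0 < C ∧ ∀ x : ℝ, 0 < x →
      a * β * x ^ (β - 1) - k * β * x ^ β - a * β * x ^ (-1 : ℝ) + k * β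
        - (σ₁^2 * β * (1 - β) / 2) * x ^ (β - 2*(1 - γ))
        + (σ₁^2 * β / 2) * x ^ (-2*(1 - γ))
        + (β * σ₂^2 / (2*(2 - α))) * x ^ (2/α - 2)
        + (β * σ₂ / (α - 1)) * (x ^ (β + 1/α - 1) + x ^ (1/α - 1)) ≤ C := by
  have hα0 : (0:ℝ) < α := by linarith
  have hinvα1 : 1/α < 1 := by rw [div_lt_one hα0]; linarith
  have hinvα0 : 0 < 1/α := by positivity
  have h2α : 1 < 2/α := by rw [lt_div_iff₀ hα0]; linarith
  have h2α' : 2/α < 2 := by rw [div_lt_iff₀ hα0]; linarith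
  set ε : ℝ := min (a*β) (k*β) / 5 with hε
  have hεpos : 0 < ε := by
    have : 0 < min (a*β) (k*β) := lt_min (by positivity) (by positivity)
    positivity
  have h5a : 5 * ε ≤ a * β := by
    have := min_le_left (a*β) (k*β); rw [hε]; linarith
  have h5k : 5 * ε ≤ k * β := by
    have := min_le_right (a*β) (k*β); rw [hε]; linarith
  obtain ⟨D₁, hD₁, hb₁⟩ := aux_rpow_bound β (-1) (a*β) ε (β-1)
    (by positivity) hεpos (by linarith) (by linarith)
  obtain ⟨D₂, hD₂, hb₂⟩ := aux_rpow_bound β (-1) (σ₁^2*β/2) ε (-2*(1-γ))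
    (by positivity) hεpos (by linarith) (by linarith)
  obtain ⟨D₃, hD₃, hb₃⟩ := aux_rpow_bound β (-1) (β*σ₂^2/(2*(2-α))) ε (2/α-2)
    (by apply div_nonneg (by positivity); linarith) hεpos (by linarith) (by linarith)
  obtain ⟨D₄, hD₄, hb₄⟩ := aux_rpow_bound β (-1) (β*σ₂/(α-1)) ε (β+1/α-1)
    (by apply div_nonneg (by positivity); linarith) hεpos (by linarith) (by linarith)
  obtain ⟨D₅, hD₅, hb₅⟩ := aux_rpow_bound β (-1) (β*σ₂/(α-1)) ε (1/α-1)
    (by apply div_nonneg (by positivity); linarith) hεpos (by linarith) (by linarith)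
  refine ⟨k*β + D₁ + D₂ + D₃ + D₄ + D₅, by positivity, fun x hx => ?_⟩
  have h1 := hb₁ x hx
  have h2 := hb₂ x hx
  have h3 := hb₃ x hx
  have h4 := hb₄ x hx
  have h5 := hb₅ x hx
  have hxβ : 0 < x ^ β := rpow_pos_of_pos hx β
  have hxi : 0 < x ^ (-1 : ℝ) := rpow_pos_of_pos hx _
  have hβε : 5 * ε * x ^ β ≤ k * β * x ^ β :=
    mul_le_mul_of_nonneg_right h5k hxβ.le
  have hiε : 5 * ε * x ^ (-1:ℝ) ≤ a * β * x ^ (-1:ℝ) :=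
    mul_le_mul_of_nonneg_right h5a hxi.le
  have hneg : 0 ≤ (σ₁^2 * β * (1 - β) / 2) * x ^ (β - 2*(1 - γ)) := by
    have := rpow_pos_of_pos hx (β - 2*(1-γ))
    have hc : 0 ≤ σ₁^2 * β * (1 - β) / 2 := by
      apply div_nonneg _ (by norm_num)
      apply mul_nonneg (by positivity); linarith
    positivity
  have hexp : (β * σ₂ / (α - 1)) * (x ^ (β + 1/α - 1) + x ^ (1/α - 1))
      = (β * σ₂ / (α - 1)) * x ^ (β + 1/α - 1) + (β * σ₂ / (α - 1)) * x ^ (1/α - 1) := by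
    ring
  rw [hexp]
  linarith
end
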